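/- Let 0 < s₁ < s₂. The families of functionals (𝒢ℒ^{s₁}_ε) and (𝒢ℒ^{s₂}_ε), defined by minimizing the Ginzburg-Landau energies GL^s_ε(w) = ½∫(|∇w|² + (s/ε²)W(w)) over fields w with prescribed rescaled Jacobian, are variationally equivalent. In particular, for the relation 𝒢ℒ^{s₂} ⪯ 𝒢ℒ^{s₁} the change of scale δ_ε = ε(s₂/s₁)^{1/2} works: for any sequence (pₙ) with 𝒢ℒ^{s₁}_{εₙ}(pₙ) ≤ C, setting qₙ = pₙ · |log εₙ|^{h−1}/|log δ_{εₙ}|^{h−1} yields limsupₙ (𝒢ℒ^{s₂}_{δ_{εₙ}}(qₙ) − 𝒢ℒ^{s₁}_{εₙ}(pₙ)) ≤ 0 and d(pₙ, qₙ) → 0 whenever (pₙ) is bounded. -/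

import Mathlib

open MeasureTheory Filter

noncomputable section

/-- Partial derivative in the first coordinate direction. -/
def pd1 (f : ℝ × ℝ → ℝ) (x : ℝ × ℝ) : ℝ := fderiv ℝ f x (1, 0)

/-- Partial derivative in the second coordinate direction. -/
def pd2 (f : ℝ × ℝ → ℝ) (x : ℝ × ℝ) : ℝ := fderiv ℝ f x (0, 1)

/-- Lipschitz functions with compact support contained in `Ω` (the space `C^{0,1}_c(Ω)`). -/
def IsLipc (Ω : Set (ℝ × ℝ)) (φ : ℝ × ℝ → ℝ) : Prop :=
  (∃ K, LipschitzWith K φ) ∧ HasCompactSupport φ ∧ tsupport φ ⊆ Ω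

/-- The unit ball of `C^{0,1}_c(Ω)`, used to compute the dual norm of `X = (C^{0,1}_c(Ω))*`. -/
def IsTestFn (Ω : Set (ℝ × ℝ)) (φ : ℝ × ℝ → ℝ) : Prop :=
  LipschitzWith 1 φ ∧ (∀ x, |φ x| ≤ 1) ∧ HasCompactSupport φ ∧ tsupport φ ⊆ Ω

/-- Elements of `X = (C^{0,1}_c(Ω))*` are modeled as real-valued functionals on test
functions. -/
abbrev XF : Type := (ℝ × ℝ → ℝ) → ℝ

/-- The dual (flat) distance on `X = (C^{0,1}_c(Ω))*`. -/
def dFlat (Ω : Set (ℝ × ℝ)) (T S : XF) : ℝ :=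
  sSup {r : ℝ | ∃ φ, IsTestFn Ω φ ∧ r = T φ - S φ}

/-- A sequence is unbounded with respect to the (pseudo)distance `d`. -/
def SeqUnboundedD {Y : Type*} (d : Y → Y → ℝ) (p : ℕ → Y) : Prop :=
  ¬ ∃ R : ℝ, ∀ m n, d (p m) (p n) ≤ R

/-- `PrecWithD d δ G F`: the order relation `(G_ε) ⪯ (F_ε)` (with respect to the distance
`d`), realized by the specific continuous increasing reparametrization `δ` with `δ 0 = 0`. -/
def PrecWithD {Y : Type*} (d : Y → Y → ℝ) (δ : ℝ → ℝ) (G F : ℝ → Y → EReal) : Prop :=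
  ContinuousOn δ (Set.Ici 0) ∧ StrictMonoOn δ (Set.Ici 0) ∧ δ 0 = 0 ∧
    ∀ ε : ℕ → ℝ, (∀ n, 0 < ε n) → Tendsto ε atTop (nhds 0) →
      ∀ p : ℕ → Y, ∀ C : ℝ, (∀ n, F (ε n) (p n) ≤ (C : EReal)) →
        ∃ q : ℕ → Y,
          limsup (fun n => G (δ (ε n)) (q n) - F (ε n) (p n)) atTop ≤ (0 : EReal) ∧
            ((SeqUnboundedD d p ∧ SeqUnboundedD d q) ∨
              Tendsto (fun n => d (p n) (q n)) atTop (nhds 0))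

/-- The order relation `(G_ε) ⪯ (F_ε)` with respect to the distance `d`. -/
def PrecD {Y : Type*} (d : Y → Y → ℝ) (G F : ℝ → Y → EReal) : Prop :=
  ∃ δ : ℝ → ℝ, PrecWithD d δ G F

/-- Variational equivalence with respect to the distance `d`. -/
def VarEquivD {Y : Type*} (d : Y → Y → ℝ) (F G : ℝ → Y → EReal) : Prop :=
  PrecD d F G ∧ PrecD d G F

/-- H¹(Ω;ℝ²) membership (modeled as: differentiable on `Ω`, with the function and its
differential in `L²(Ω)`). -/
def MemH1 (Ω : Set (ℝ × ℝ)) (w : ℝ × ℝ → ℝ × ℝ) : Prop :=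
  MemLp w 2 (volume.restrict Ω) ∧ (∀ x ∈ Ω, DifferentiableAt ℝ w x) ∧
    MemLp (fun x => fderiv ℝ w x) 2 (volume.restrict Ω)

/-- The distributional action of the Jacobian `Jw = det ∇w` on a test function:
`⟨Jw, φ⟩ = −∫_Ω ( w₁ (w₂)_{x₂} φ_{x₁} − w₁ (w₂)_{x₁} φ_{x₂} ) dx`. -/
def Jpairing (Ω : Set (ℝ × ℝ)) (w : ℝ × ℝ → ℝ × ℝ) (φ : ℝ × ℝ → ℝ) : ℝ :=
  -∫ x in Ω, ((w x).1 * pd2 (fun y => (w y).2) x * pd1 φ x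
      - (w x).1 * pd1 (fun y => (w y).2) x * pd2 φ x)

/-- The Ginzburg–Landau energy `GL^s_ε(w) = ½ ∫_Ω ( |∇w|² + (s/ε²) (1−|w|)² )`. -/
def GLE (s ε : ℝ) (Ω : Set (ℝ × ℝ)) (w : ℝ × ℝ → ℝ × ℝ) : ℝ :=
  (1 / 2) * ∫ x in Ω, (‖fderiv ℝ w x‖ ^ 2 + (s / ε ^ 2) * (1 - ‖w x‖) ^ 2)

/-- The rescaled Ginzburg–Landau functional on `X`:
`𝒢ℒ^s_ε(μ) = |log ε|^{−h} inf { GL^s_ε(w) : w ∈ H¹(Ω;ℝ²), Jw/(π |log ε|^{h−1}) = μ }`,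
with `inf ∅ = +∞`. -/
def GLF (s h : ℝ) (Ω : Set (ℝ × ℝ)) : ℝ → XF → EReal := fun ε μ =>
  sInf {E : EReal | ∃ w : ℝ × ℝ → ℝ × ℝ, MemH1 Ω w ∧
    (∀ φ, IsLipc Ω φ → Jpairing Ω w φ = Real.pi * |Real.log ε| ^ (h - 1) * μ φ) ∧
    E = ((GLE s ε Ω w / |Real.log ε| ^ h : ℝ) : EReal)}

section Aux

lemma isTestFn_zero (Ω : Set (ℝ × ℝ)) : IsTestFn Ω (fun _ => (0:ℝ)) := by
  refine ⟨(LipschitzWith.const (0:ℝ)).weaken zero_le_one, fun x => by norm_num, ?_, ?_⟩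
  · rw [HasCompactSupport]
    have : tsupport (fun _ : ℝ × ℝ => (0:ℝ)) = ∅ := by
      simp [tsupport, Function.support_zero]
    rw [this]; exact isCompact_empty
  · have : tsupport (fun _ : ℝ × ℝ => (0:ℝ)) = ∅ := by
      simp [tsupport, Function.support_zero]
    rw [this]; exact Set.empty_subset _

lemma IsTestFn.isLipc {Ω : Set (ℝ × ℝ)} {φ : ℝ × ℝ → ℝ} (hφ : IsTestFn Ω φ) : IsLipc Ω φ :=
  ⟨⟨1, hφ.1⟩, hφ.2.2.1, hφ.2.2.2⟩

lemma GLE_nonneg {s ε : ℝ} (hs : 0 ≤ s / ε ^ 2) (Ω : Set (ℝ × ℝ)) (w : ℝ × ℝ → ℝ × ℝ) :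
    0 ≤ GLE s ε Ω w := by
  apply mul_nonneg (by norm_num)
  apply integral_nonneg
  intro x
  have := sq_nonneg (‖fderiv ℝ w x‖)
  have := mul_nonneg hs (sq_nonneg (1 - ‖w x‖))
  positivity

lemma GLF_le {Ω : Set (ℝ × ℝ)} {s h ε : ℝ} {μ : XF} {w : ℝ × ℝ → ℝ × ℝ}
    (hw : MemH1 Ω w)
    (hc : ∀ φ, IsLipc Ω φ → Jpairing Ω w φ = Real.pi * |Real.log ε| ^ (h - 1) * μ φ) :
    GLF s h Ω ε μ ≤ ((GLE s ε Ω w / |Real.log ε| ^ h : ℝ) : EReal) :=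
  sInf_le ⟨w, hw, hc, rfl⟩

lemma GLF_nonneg {Ω : Set (ℝ × ℝ)} {s h ε : ℝ} (hs : 0 ≤ s / ε ^ 2)
    (hL : 0 < |Real.log ε|) (μ : XF) : 0 ≤ GLF s h Ω ε μ := by
  apply le_sInf
  rintro E ⟨w, hw, hc, rfl⟩
  have h1 : 0 ≤ GLE s ε Ω w / |Real.log ε| ^ h :=
    div_nonneg (GLE_nonneg hs Ω w) (Real.rpow_pos_of_pos hL h).le
  exact_mod_cast h1

lemma exists_of_GLF_lt {Ω : Set (ℝ × ℝ)} {s h ε t : ℝ} {μ : XF}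
    (hL : 0 < |Real.log ε|) (ht : GLF s h Ω ε μ < (t : EReal)) :
    ∃ w : ℝ × ℝ → ℝ × ℝ, MemH1 Ω w ∧
      (∀ φ, IsLipc Ω φ → Jpairing Ω w φ = Real.pi * |Real.log ε| ^ (h - 1) * μ φ) ∧
      GLE s ε Ω w < t * |Real.log ε| ^ h := by
  obtain ⟨E, hE, hlt⟩ := sInf_lt_iff.1 ht
  obtain ⟨w, hw, hc, rfl⟩ := hE
  refine ⟨w, hw, hc, ?_⟩
  rw [EReal.coe_lt_coe_iff] at hlt
  rwa [div_lt_iff₀ (Real.rpow_pos_of_pos hL h)] at hlt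

end Aux

section Aux2

variable {Ω : Set (ℝ × ℝ)} {w : ℝ × ℝ → ℝ × ℝ}

lemma integrable_fderiv_sq (hw : MemH1 Ω w) :
    Integrable (fun x => ‖fderiv ℝ w x‖ ^ 2) (volume.restrict Ω) :=
  hw.2.2.norm.integrable_sq

lemma integrable_norm_sq (hw : MemH1 Ω w) :
    Integrable (fun x => ‖w x‖ ^ 2) (volume.restrict Ω) :=
  hw.1.norm.integrable_sq

lemma finiteRestrict (hΩb : Bornology.IsBounded Ω) :
    IsFiniteMeasure (volume.restrict Ω) :=
  ⟨by rw [Measure.restrict_apply_univ]; exact hΩb.measure_lt_top⟩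

lemma integrable_one_sub_norm_sq (hΩb : Bornology.IsBounded Ω) (hw : MemH1 Ω w) :
    Integrable (fun x => (1 - ‖w x‖) ^ 2) (volume.restrict Ω) := by
  have := finiteRestrict hΩb
  have hg : Integrable (fun x => 2 + 2 * ‖w x‖ ^ 2) (volume.restrict Ω) :=
    (integrable_const 2).add ((integrable_norm_sq hw).const_mul 2)
  refine hg.mono' ?_ ?_
  · exact ((aestronglyMeasurable_const.sub hw.1.aestronglyMeasurable.norm).pow 2)
  · filter_upwards with x
    have h1 : ‖(1 - ‖w x‖) ^ 2‖ = (1 - ‖w x‖) ^ 2 := by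
      rw [Real.norm_eq_abs, abs_of_nonneg (sq_nonneg _)]
    rw [h1]
    nlinarith [norm_nonneg (w x), sq_nonneg (1 + ‖w x‖)]

lemma GLE_split (hΩb : Bornology.IsBounded Ω) (hw : MemH1 Ω w) (s ε : ℝ) :
    GLE s ε Ω w = (1 / 2) * ((∫ x in Ω, ‖fderiv ℝ w x‖ ^ 2)
      + (s / ε ^ 2) * ∫ x in Ω, (1 - ‖w x‖) ^ 2) := by
  unfold GLE
  rw [integral_add (integrable_fderiv_sq hw)
    ((integrable_one_sub_norm_sq hΩb hw).const_mul _), integral_const_mul]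

lemma norm_sq_integral_le (hΩb : Bornology.IsBounded Ω) (hw : MemH1 Ω w) :
    (∫ x in Ω, ‖w x‖ ^ 2) ≤ 2 * (volume Ω).toReal + 2 * ∫ x in Ω, (1 - ‖w x‖) ^ 2 := by
  have := finiteRestrict hΩb
  have h1 : (∫ x in Ω, ‖w x‖ ^ 2) ≤ ∫ x in Ω, (2 + 2 * (1 - ‖w x‖) ^ 2) := by
    apply integral_mono (integrable_norm_sq hw)
      ((integrable_const 2).add ((integrable_one_sub_norm_sq hΩb hw).const_mul 2))
    intro x
    simp only [Pi.add_apply]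
    nlinarith [sq_nonneg (‖w x‖ - 2)]
  calc (∫ x in Ω, ‖w x‖ ^ 2) ≤ ∫ x in Ω, (2 + 2 * (1 - ‖w x‖) ^ 2) := h1
    _ = 2 * (volume Ω).toReal + 2 * ∫ x in Ω, (1 - ‖w x‖) ^ 2 := by
        rw [integral_add (integrable_const 2)
          ((integrable_one_sub_norm_sq hΩb hw).const_mul 2), integral_const_mul,
          integral_const, measureReal_restrict_apply_univ, measureReal_def, smul_eq_mul, mul_comm]

end Aux2

section Aux3

variable {Ω : Set (ℝ × ℝ)} {w : ℝ × ℝ → ℝ × ℝ}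

lemma norm_onezero : ‖((1:ℝ), (0:ℝ))‖ = 1 := by
  simp [Prod.norm_def]

lemma norm_zeroone : ‖((0:ℝ), (1:ℝ))‖ = 1 := by
  simp [Prod.norm_def]

lemma abs_pd_phi_le {φ : ℝ × ℝ → ℝ} (hφ : LipschitzWith 1 φ) (x : ℝ × ℝ) :
    |pd1 φ x| ≤ 1 ∧ |pd2 φ x| ≤ 1 := by
  have hop : ‖fderiv ℝ φ x‖ ≤ 1 := by
    have := norm_fderiv_le_of_lipschitz ℝ hφ (x₀ := x)
    simpa using this
  constructor
  · rw [pd1, ← Real.norm_eq_abs]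
    calc ‖fderiv ℝ φ x (1, 0)‖ ≤ ‖fderiv ℝ φ x‖ * ‖((1:ℝ), (0:ℝ))‖ :=
          ContinuousLinearMap.le_opNorm _ _
      _ ≤ 1 := by rw [norm_onezero, mul_one]; exact hop
  · rw [pd2, ← Real.norm_eq_abs]
    calc ‖fderiv ℝ φ x (0, 1)‖ ≤ ‖fderiv ℝ φ x‖ * ‖((0:ℝ), (1:ℝ))‖ :=
          ContinuousLinearMap.le_opNorm _ _
      _ ≤ 1 := by rw [norm_zeroone, mul_one]; exact hop

lemma abs_pd_w2_le (x : ℝ × ℝ) (hd : DifferentiableAt ℝ w x) :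
    |pd1 (fun y => (w y).2) x| ≤ ‖fderiv ℝ w x‖ ∧
      |pd2 (fun y => (w y).2) x| ≤ ‖fderiv ℝ w x‖ := by
  have hsnd : fderiv ℝ (fun y => (w y).2) x
      = (ContinuousLinearMap.snd ℝ ℝ ℝ).comp (fderiv ℝ w x) :=
    (hd.hasFDerivAt.snd).fderiv
  constructor
  · rw [pd1, hsnd, ContinuousLinearMap.comp_apply, ← Real.norm_eq_abs]
    calc ‖(ContinuousLinearMap.snd ℝ ℝ ℝ) ((fderiv ℝ w x) (1, 0))‖
        = ‖((fderiv ℝ w x) (1, 0)).2‖ := rfl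
      _ ≤ ‖(fderiv ℝ w x) (1, 0)‖ := norm_snd_le _
      _ ≤ ‖fderiv ℝ w x‖ * ‖((1:ℝ), (0:ℝ))‖ := ContinuousLinearMap.le_opNorm _ _
      _ = ‖fderiv ℝ w x‖ := by rw [norm_onezero, mul_one]
  · rw [pd2, hsnd, ContinuousLinearMap.comp_apply, ← Real.norm_eq_abs]
    calc ‖(ContinuousLinearMap.snd ℝ ℝ ℝ) ((fderiv ℝ w x) (0, 1))‖
        = ‖((fderiv ℝ w x) (0, 1)).2‖ := rfl
      _ ≤ ‖(fderiv ℝ w x) (0, 1)‖ := norm_snd_le _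
      _ ≤ ‖fderiv ℝ w x‖ * ‖((0:ℝ), (1:ℝ))‖ := ContinuousLinearMap.le_opNorm _ _
      _ = ‖fderiv ℝ w x‖ := by rw [norm_zeroone, mul_one]

lemma abs_Jpairing_le (hΩo : IsOpen Ω) (hw : MemH1 Ω w) {φ : ℝ × ℝ → ℝ}
    (hφ : LipschitzWith 1 φ) {lam : ℝ} (hlam : 0 < lam) :
    |Jpairing Ω w φ| ≤ lam * (∫ x in Ω, ‖w x‖ ^ 2)
      + (1 / lam) * ∫ x in Ω, ‖fderiv ℝ w x‖ ^ 2 := by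
  have hg : Integrable (fun x => lam * ‖w x‖ ^ 2 + (1 / lam) * ‖fderiv ℝ w x‖ ^ 2)
      (volume.restrict Ω) :=
    ((integrable_norm_sq hw).const_mul lam).add ((integrable_fderiv_sq hw).const_mul _)
  have hae : ∀ᵐ x ∂(volume.restrict Ω),
      ‖(w x).1 * pd2 (fun y => (w y).2) x * pd1 φ x
        - (w x).1 * pd1 (fun y => (w y).2) x * pd2 φ x‖
        ≤ lam * ‖w x‖ ^ 2 + (1 / lam) * ‖fderiv ℝ w x‖ ^ 2 := by
    rw [ae_restrict_iff' hΩo.measurableSet]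
    filter_upwards with x hx
    obtain ⟨hp1, hp2⟩ := abs_pd_phi_le hφ x
    obtain ⟨hq1, hq2⟩ := abs_pd_w2_le x (hw.2.1 x hx)
    have h1 : |(w x).1| ≤ ‖w x‖ := by
      rw [← Real.norm_eq_abs]; exact norm_fst_le _
    have ha0 : (0:ℝ) ≤ ‖w x‖ := norm_nonneg _
    have hb0 : (0:ℝ) ≤ ‖fderiv ℝ w x‖ := norm_nonneg _
    rw [Real.norm_eq_abs]
    have e1 : |(w x).1 * pd2 (fun y => (w y).2) x * pd1 φ x| ≤ ‖w x‖ * ‖fderiv ℝ w x‖ := by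
      rw [abs_mul, abs_mul]
      calc |(w x).1| * |pd2 (fun y => (w y).2) x| * |pd1 φ x|
          ≤ ‖w x‖ * ‖fderiv ℝ w x‖ * 1 :=
            mul_le_mul (mul_le_mul h1 hq2 (abs_nonneg _) (norm_nonneg _)) hp1
              (abs_nonneg _) (by positivity)
        _ = ‖w x‖ * ‖fderiv ℝ w x‖ := mul_one _
    have e2 : |(w x).1 * pd1 (fun y => (w y).2) x * pd2 φ x| ≤ ‖w x‖ * ‖fderiv ℝ w x‖ := by
      rw [abs_mul, abs_mul]
      calc |(w x).1| * |pd1 (fun y => (w y).2) x| * |pd2 φ x|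
          ≤ ‖w x‖ * ‖fderiv ℝ w x‖ * 1 :=
            mul_le_mul (mul_le_mul h1 hq1 (abs_nonneg _) (norm_nonneg _)) hp2
              (abs_nonneg _) (by positivity)
        _ = ‖w x‖ * ‖fderiv ℝ w x‖ := mul_one _
    have e3 : |(w x).1 * pd2 (fun y => (w y).2) x * pd1 φ x
        - (w x).1 * pd1 (fun y => (w y).2) x * pd2 φ x|
        ≤ 2 * (‖w x‖ * ‖fderiv ℝ w x‖) := by
      calc |(w x).1 * pd2 (fun y => (w y).2) x * pd1 φ x
          - (w x).1 * pd1 (fun y => (w y).2) x * pd2 φ x|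
          ≤ |(w x).1 * pd2 (fun y => (w y).2) x * pd1 φ x|
            + |(w x).1 * pd1 (fun y => (w y).2) x * pd2 φ x| := abs_sub _ _
        _ ≤ 2 * (‖w x‖ * ‖fderiv ℝ w x‖) := by linarith
    refine e3.trans ?_
    have h2 : 2 * (‖w x‖ * ‖fderiv ℝ w x‖) * lam
        ≤ (lam * ‖w x‖ ^ 2 + (1 / lam) * ‖fderiv ℝ w x‖ ^ 2) * lam := by
      have hinv : lam * (1 / lam) = 1 := by field_simp
      nlinarith [sq_nonneg (lam * ‖w x‖ - ‖fderiv ℝ w x‖), hinv]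
    exact le_of_mul_le_mul_right h2 hlam
  unfold Jpairing
  rw [abs_neg, ← Real.norm_eq_abs]
  calc ‖∫ x in Ω, ((w x).1 * pd2 (fun y => (w y).2) x * pd1 φ x
        - (w x).1 * pd1 (fun y => (w y).2) x * pd2 φ x)‖
      ≤ ∫ x in Ω, (lam * ‖w x‖ ^ 2 + (1 / lam) * ‖fderiv ℝ w x‖ ^ 2) :=
        norm_integral_le_of_norm_le hg hae
    _ = lam * (∫ x in Ω, ‖w x‖ ^ 2) + (1 / lam) * ∫ x in Ω, ‖fderiv ℝ w x‖ ^ 2 := by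
        rw [integral_add ((integrable_norm_sq hw).const_mul lam)
          ((integrable_fderiv_sq hw).const_mul _), integral_const_mul, integral_const_mul]

lemma Jpairing_zero (Ω : Set (ℝ × ℝ)) (w : ℝ × ℝ → ℝ × ℝ) :
    Jpairing Ω w (fun _ => (0:ℝ)) = 0 := by
  unfold Jpairing pd1 pd2
  simp

lemma dFlat_bounds {Ω : Set (ℝ × ℝ)} {p q : XF} {ρ : ℝ}
    (h0 : p (fun _ => 0) - q (fun _ => 0) = 0)
    (hb : ∀ φ, IsTestFn Ω φ → |p φ - q φ| ≤ ρ) :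
    0 ≤ dFlat Ω p q ∧ dFlat Ω p q ≤ ρ := by
  have hmem : (0:ℝ) ∈ {r : ℝ | ∃ φ, IsTestFn Ω φ ∧ r = p φ - q φ} :=
    ⟨_, isTestFn_zero Ω, h0.symm⟩
  have hub : ∀ r ∈ {r : ℝ | ∃ φ, IsTestFn Ω φ ∧ r = p φ - q φ}, r ≤ ρ := by
    rintro r ⟨φ, hφ, rfl⟩
    exact (abs_le.1 (hb φ hφ)).2
  constructor
  · exact le_csSup ⟨ρ, hub⟩ hmem
  · exact csSup_le ⟨0, hmem⟩ hub

end Aux3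

section Aux4

lemma abs_exp_sub_one_le (t : ℝ) : |Real.exp t - 1| ≤ |t| * Real.exp |t| := by
  rcases le_or_gt 0 t with ht | ht
  · rw [abs_of_nonneg ht, abs_of_nonneg (by linarith [Real.one_le_exp ht])]
    have h1 : 1 - t ≤ Real.exp (-t) := by linarith [Real.add_one_le_exp (-t)]
    have h2 : (1 - t) * Real.exp t ≤ Real.exp (-t) * Real.exp t :=
      mul_le_mul_of_nonneg_right h1 (Real.exp_pos t).le
    rw [← Real.exp_add, neg_add_cancel, Real.exp_zero] at h2
    nlinarith [Real.exp_pos t]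
  · have he1 : Real.exp t < 1 := Real.exp_lt_one_iff.2 ht
    rw [abs_of_neg ht, abs_of_nonpos (by linarith)]
    have h1 : 1 - Real.exp t ≤ -t := by linarith [Real.add_one_le_exp t]
    have h2 : -t ≤ -t * Real.exp (-t) :=
      le_mul_of_one_le_right (by linarith) (Real.one_le_exp (by linarith))
    linarith

lemma abs_log_le_two_abs {x : ℝ} (hx : 1 / 2 ≤ x) : |Real.log x| ≤ 2 * |x - 1| := by
  have hx0 : 0 < x := by linarith
  rcases le_or_gt 1 x with h1 | h1
  · rw [abs_of_nonneg (Real.log_nonneg h1), abs_of_nonneg (by linarith)]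
    linarith [Real.log_le_sub_one_of_pos hx0]
  · rw [abs_of_nonpos (Real.log_nonpos hx0.le h1.le), abs_of_neg (by linarith)]
    have h2 : Real.log x⁻¹ ≤ x⁻¹ - 1 := Real.log_le_sub_one_of_pos (by positivity)
    rw [Real.log_inv] at h2
    have hinv : x * x⁻¹ = 1 := mul_inv_cancel₀ hx0.ne'
    have h3 : x⁻¹ - 1 ≤ 2 * (1 - x) := by
      nlinarith [mul_nonneg (by linarith : (0:ℝ) ≤ 1 - x) (by linarith : (0:ℝ) ≤ 2 * x - 1),
        hinv, hx0]
    linarith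

lemma abs_rpow_sub_one_le {β x : ℝ} (hβ : 0 ≤ β) (hx : 1 / 2 ≤ x)
    (hc : 2 * β * |x - 1| ≤ 1) : |x ^ β - 1| ≤ 6 * β * |x - 1| := by
  have hx0 : 0 < x := by linarith
  rw [Real.rpow_def_of_pos hx0]
  have h2 : |Real.log x * β| ≤ 2 * β * |x - 1| := by
    rw [abs_mul, abs_of_nonneg hβ]
    calc |Real.log x| * β ≤ 2 * |x - 1| * β :=
          mul_le_mul_of_nonneg_right (abs_log_le_two_abs hx) hβ
      _ = 2 * β * |x - 1| := by ring
  have h3 : Real.exp |Real.log x * β| ≤ 3 := by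
    calc Real.exp |Real.log x * β| ≤ Real.exp 1 := Real.exp_le_exp.2 (h2.trans hc)
      _ ≤ 3 := by linarith [Real.exp_one_lt_d9]
  calc |Real.exp (Real.log x * β) - 1|
      ≤ |Real.log x * β| * Real.exp |Real.log x * β| := abs_exp_sub_one_le _
    _ ≤ (2 * β * |x - 1|) * 3 :=
        mul_le_mul h2 h3 (Real.exp_pos _).le (by positivity)
    _ = 6 * β * |x - 1| := by ring

lemma limsup_le_zero_of_forall {u : ℕ → EReal}
    (hk : ∀ η : ℝ, 0 < η → limsup u atTop ≤ (η : EReal)) :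
    limsup u atTop ≤ (0 : EReal) := by
  by_contra hlt
  push_neg at hlt
  obtain ⟨y, hy0, hy⟩ := EReal.exists_between_coe_real hlt
  have hy0' : (0:ℝ) < y := by exact_mod_cast hy0
  exact absurd (hk y hy0') (not_le.2 hy)

end Aux4

section Aux5

lemma pack {ε r aa : ℝ} (hε : 0 < ε) (hr : 0 < r) (haa : aa = Real.log r)
    (hn : Real.log ε ≤ -(2 * |aa| + 2)) :
    ε < 1 ∧ ε * r < 1 ∧ 0 < |Real.log ε| ∧ 2 * |aa| + 2 ≤ |Real.log ε| ∧
      |Real.log (ε * r)| = |Real.log ε| - aa ∧ 0 < |Real.log (ε * r)| ∧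
      |Real.log ε| / 2 ≤ |Real.log (ε * r)| := by
  have haa0 : 0 ≤ |aa| := abs_nonneg aa
  have h1 : Real.log ε < 0 := by linarith
  have hε1 : ε < 1 := (Real.log_neg_iff hε).1 h1
  have hLe : |Real.log ε| = -Real.log ε := abs_of_neg h1
  have hle2 : 2 * |aa| + 2 ≤ |Real.log ε| := by rw [hLe]; linarith
  have hlm : Real.log (ε * r) = Real.log ε + aa := by
    rw [haa]; exact Real.log_mul hε.ne' hr.ne'
  have h2 : Real.log (ε * r) < 0 := by
    have := le_abs_self aa; rw [hlm]; linarith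
  have hd1 : ε * r < 1 := (Real.log_neg_iff (mul_pos hε hr)).1 h2
  have hLd : |Real.log (ε * r)| = |Real.log ε| - aa := by
    rw [abs_of_neg h2, hlm, hLe]; ring
  have habs := le_abs_self aa
  have habs' := neg_abs_le aa
  refine ⟨hε1, hd1, by linarith, hle2, hLd, by rw [hLd]; linarith, by rw [hLd]; linarith⟩

end Aux5

section Master

set_option maxHeartbeats 1000000 in
lemma master (Ω : Set (ℝ × ℝ)) (hΩo : IsOpen Ω) (hΩb : Bornology.IsBounded Ω)
    (h : ℝ) (hh : 1 ≤ h) (s s' : ℝ) (hs : 0 < s) (hs' : 0 < s')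
    (ε : ℕ → ℝ) (hε : ∀ n, 0 < ε n) (hε0 : Tendsto ε atTop (nhds 0))
    (p : ℕ → XF) (C : ℝ) (hp : ∀ n, GLF s h Ω (ε n) (p n) ≤ (C : EReal))
    (q : ℕ → XF)
    (hq : ∀ n, q n = fun φ => (|Real.log (ε n)| ^ (h - 1)
        / |Real.log (ε n * Real.sqrt (s' / s))| ^ (h - 1)) * p n φ) :
    limsup (fun n => GLF s' h Ω (ε n * Real.sqrt (s' / s)) (q n)
        - GLF s h Ω (ε n) (p n)) atTop ≤ (0 : EReal) ∧
      Tendsto (fun n => dFlat Ω (p n) (q n)) atTop (nhds 0) := by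
  set r : ℝ := Real.sqrt (s' / s) with hrdef
  have hr : 0 < r := Real.sqrt_pos.2 (div_pos hs' hs)
  set a : ℝ := Real.log r with hadef
  set M0 : ℝ := max C 0 + 1 with hM0def
  have hMC : (0:ℝ) ≤ max C 0 := le_max_right C 0
  have hM0 : 0 < M0 := by rw [hM0def]; linarith
  have hlogtop : Tendsto (fun n => Real.log (ε n)) atTop atBot :=
    Real.tendsto_log_nhdsGT_zero.comp
      (tendsto_nhdsWithin_iff.2 ⟨hε0, Eventually.of_forall fun n => Set.mem_Ioi.2 (hε n)⟩)
  have hLtop : Tendsto (fun n => |Real.log (ε n)|) atTop atTop :=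
    tendsto_abs_atBot_atTop.comp hlogtop
  have hev1 : ∀ᶠ n in atTop, Real.log (ε n) ≤ -(2 * |a| + 2) :=
    hlogtop.eventually (eventually_le_atBot _)
  have hsc : ∀ n, s' / (ε n * r) ^ 2 = s / (ε n) ^ 2 := by
    intro n
    have hεn := hε n
    have hr2 : r ^ 2 = s' / s := Real.sq_sqrt (div_pos hs' hs).le
    rw [mul_pow, hr2]
    rw [div_eq_div_iff (by positivity) (by positivity)]
    field_simp
  have hLdtop : Tendsto (fun n => |Real.log (ε n * r)|) atTop atTop := by
    apply Tendsto.congr' _ (tendsto_atTop_add_const_right atTop (-a) hLtop)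
    filter_upwards [hev1] with n hn
    obtain ⟨_, _, _, _, hLd, _, _⟩ := pack (hε n) hr hadef hn
    rw [hLd]; ring
  have hX : Tendsto (fun n => |Real.log (ε n)| / |Real.log (ε n * r)|) atTop (nhds 1) := by
    have h1 : Tendsto (fun n => 1 + a / |Real.log (ε n * r)|) atTop (nhds 1) := by
      have h2 := (tendsto_const_nhds (x := (1:ℝ)) (f := atTop)).add
        ((tendsto_const_nhds (x := a) (f := (atTop : Filter ℕ))).div_atTop hLdtop)
      simpa using h2
    apply h1.congr'
    filter_upwards [hev1] with n hn
    obtain ⟨_, _, _, _, hLd, hLd0, _⟩ := pack (hε n) hr hadef hn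
    have hLe : |Real.log (ε n)| = |Real.log (ε n * r)| + a := by rw [hLd]; ring
    rw [hLe]
    field_simp
  constructor
  · -- limsup part
    apply limsup_le_zero_of_forall
    intro η hη
    have hc : Tendsto (fun n => |Real.log (ε n)| ^ h / |Real.log (ε n * r)| ^ h)
        atTop (nhds 1) := by
      have h2 : Tendsto (fun n => (|Real.log (ε n)| / |Real.log (ε n * r)|) ^ h)
          atTop (nhds 1) := by
        have h3 := (Real.continuousAt_rpow_const 1 h (Or.inl one_ne_zero)).tendsto.comp hX
        simpa [Real.one_rpow, Function.comp_def] using h3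
      exact h2.congr fun n => Real.div_rpow (abs_nonneg _) (abs_nonneg _) h
    have hb : (0:ℝ) < min (η / (4 * M0)) 1 := lt_min (by positivity) one_pos
    have h4 : ∀ᶠ x : ℝ in nhds 1, |x - 1| ≤ min (η / (4 * M0)) 1 := by
      filter_upwards [Metric.closedBall_mem_nhds (1:ℝ) hb] with x hx
      rwa [Metric.mem_closedBall, Real.dist_eq] at hx
    have hevc := hc.eventually h4
    refine limsup_le_of_le (by isBoundedDefault) ?_
    filter_upwards [hev1, hevc] with n hn hcn
    obtain ⟨hε1, hδ1, hLe0, hLe2, hLdeq, hLd0, hLdhalf⟩ := pack (hε n) hr hadef hn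
    have hse : (0:ℝ) ≤ s / ε n ^ 2 := (div_pos hs (pow_pos (hε n) 2)).le
    have hge := GLF_nonneg (Ω := Ω) (h := h) hse hLe0 (p n)
    have hneT : GLF s h Ω (ε n) (p n) ≠ ⊤ := ((hp n).trans_lt (EReal.coe_lt_top C)).ne
    have hneB : GLF s h Ω (ε n) (p n) ≠ ⊥ := by
      intro hbot; rw [hbot] at hge; exact absurd hge (by simp)
    set Fn := (GLF s h Ω (ε n) (p n)).toReal with hFndef
    have hFeq : GLF s h Ω (ε n) (p n) = (Fn : EReal) := (EReal.coe_toReal hneT hneB).symm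
    have hFn0 : 0 ≤ Fn := by rw [hFeq] at hge; exact_mod_cast hge
    have hFnC : Fn ≤ C := by have h5 := hp n; rw [hFeq] at h5; exact_mod_cast h5
    have hlt : GLF s h Ω (ε n) (p n) < ((Fn + η / 4 : ℝ) : EReal) := by
      rw [hFeq]; exact_mod_cast (by linarith : Fn < Fn + η / 4)
    obtain ⟨w, hwm, hwc, hwE⟩ := exists_of_GLF_lt hLe0 hlt
    have hLd1 : (0:ℝ) < |Real.log (ε n * r)| ^ (h - 1) := Real.rpow_pos_of_pos hLd0 _
    have hLdh : (0:ℝ) < |Real.log (ε n * r)| ^ h := Real.rpow_pos_of_pos hLd0 _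
    have hwc' : ∀ φ, IsLipc Ω φ → Jpairing Ω w φ
        = Real.pi * |Real.log (ε n * r)| ^ (h - 1) * q n φ := by
      intro φ hφ
      rw [hq n]
      simp only
      rw [hwc φ hφ]
      field_simp
    have hG := GLF_le (s := s') (h := h) (ε := ε n * r) hwm hwc'
    have hGLEeq : GLE s' (ε n * r) Ω w = GLE s (ε n) Ω w := by
      unfold GLE; rw [hsc n]
    have harith0 : GLE s (ε n) Ω w / |Real.log (ε n * r)| ^ h
        ≤ (Fn + η / 4) * (|Real.log (ε n)| ^ h / |Real.log (ε n * r)| ^ h) := by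
      rw [← mul_div_assoc]
      apply div_le_div_of_nonneg_right hwE.le hLdh.le
    have hcn1 : |Real.log (ε n)| ^ h / |Real.log (ε n * r)| ^ h ≤ 2 := by
      have h5 := (abs_le.1 hcn).2
      have h6 := min_le_right (η / (4 * M0)) 1
      linarith
    have hcn2 : |Real.log (ε n)| ^ h / |Real.log (ε n * r)| ^ h - 1 ≤ η / (4 * M0) := by
      have h5 := (abs_le.1 hcn).2
      have h6 := min_le_left (η / (4 * M0)) 1
      linarith
    have hcn0 : (0:ℝ) ≤ |Real.log (ε n)| ^ h / |Real.log (ε n * r)| ^ h := by positivity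
    have harith : (Fn + η / 4) * (|Real.log (ε n)| ^ h / |Real.log (ε n * r)| ^ h) - Fn
        ≤ η := by
      set cn := |Real.log (ε n)| ^ h / |Real.log (ε n * r)| ^ h with hcndef
      have hFnC' : Fn ≤ max C 0 := le_trans hFnC (le_max_left C 0)
      have e1 : Fn * (cn - 1) ≤ max C 0 * (η / (4 * M0)) := by
        rcases le_or_gt (cn - 1) 0 with hc0 | hc0
        · have e1a : Fn * (cn - 1) ≤ 0 := mul_nonpos_of_nonneg_of_nonpos hFn0 hc0
          have e1b : (0:ℝ) ≤ max C 0 * (η / (4 * M0)) := by positivity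
          linarith
        · calc Fn * (cn - 1) ≤ max C 0 * (cn - 1) :=
              mul_le_mul_of_nonneg_right hFnC' hc0.le
            _ ≤ max C 0 * (η / (4 * M0)) := mul_le_mul_of_nonneg_left hcn2 hMC
      have e2 : max C 0 * (η / (4 * M0)) ≤ η / 4 := by
        rw [hM0def, mul_div_assoc', div_le_div_iff₀ (by positivity) (by norm_num : (0:ℝ) < 4)]
        nlinarith [hMC, hη.le]
      have e3 : (η / 4) * cn ≤ (η / 4) * 2 := mul_le_mul_of_nonneg_left hcn1 (by positivity)
      have expand : (Fn + η / 4) * cn - Fn = Fn * (cn - 1) + (η / 4) * cn := by ring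
      rw [expand]
      linarith
    calc GLF s' h Ω (ε n * r) (q n) - GLF s h Ω (ε n) (p n)
        ≤ (((Fn + η / 4) * (|Real.log (ε n)| ^ h / |Real.log (ε n * r)| ^ h) : ℝ) : EReal)
          - ((Fn : ℝ) : EReal) := by
          apply EReal.sub_le_sub _ (le_of_eq hFeq.symm)
          refine hG.trans ?_
          have h7 : GLE s' (ε n * r) Ω w / |Real.log (ε n * r)| ^ h
              ≤ (Fn + η / 4) * (|Real.log (ε n)| ^ h / |Real.log (ε n * r)| ^ h) := by
            rw [hGLEeq]; exact harith0
          exact_mod_cast h7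
      _ = (((Fn + η / 4) * (|Real.log (ε n)| ^ h / |Real.log (ε n * r)| ^ h) - Fn : ℝ)
          : EReal) := by rw [EReal.coe_sub]
      _ ≤ ((η : ℝ) : EReal) := by exact_mod_cast harith
  · -- dFlat part
    have hev2 : ∀ᶠ n in atTop, 4 * (h - 1) * |a| + 2 * |a| + 2 ≤ |Real.log (ε n)| :=
      hLtop.eventually (eventually_ge_atTop _)
    have hEPS : Tendsto (fun n => ε n ^ 2 * |Real.log (ε n)| ^ h) atTop (nhds 0) := by
      have h1 : Tendsto (fun x : ℝ => x ^ h * Real.exp (-2 * x)) atTop (nhds 0) :=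
        tendsto_rpow_mul_exp_neg_mul_atTop_nhds_zero h 2 (by norm_num)
      apply Tendsto.congr' _ (h1.comp hLtop)
      filter_upwards [hev1] with n hn
      have hl0 : Real.log (ε n) < 0 := by have := abs_nonneg a; linarith
      have hLe : |Real.log (ε n)| = -Real.log (ε n) := abs_of_neg hl0
      have he : Real.exp (-2 * |Real.log (ε n)|) = ε n ^ 2 := by
        rw [hLe, show (-2 : ℝ) * -Real.log (ε n) = Real.log (ε n) * 2 by ring,
          Real.exp_mul, Real.exp_log (hε n),
          show ((2:ℝ)) = ((2:ℕ):ℝ) by norm_num, Real.rpow_natCast]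
      simp only [Function.comp_apply]
      rw [he]
      ring
    have hevEPS : ∀ᶠ n in atTop, ε n ^ 2 * |Real.log (ε n)| ^ h ≤ s / (4 * M0) :=
      hEPS.eventually (eventually_le_nhds (by positivity))
    have hg0 : Tendsto (fun n =>
        (12 * (h - 1) * |a| * ((2 * (volume Ω).toReal + 1 + 2 * M0) / Real.pi))
          * |Real.log (ε n)| ^ (-(h / 2))) atTop (nhds 0) := by
      have h1 := (tendsto_rpow_neg_atTop (by linarith : (0:ℝ) < h / 2)).comp hLtop
      have h2 := h1.const_mul
        (12 * (h - 1) * |a| * ((2 * (volume Ω).toReal + 1 + 2 * M0) / Real.pi))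
      simpa using h2
    have hev3 : ∀ᶠ n in atTop, 0 ≤ dFlat Ω (p n) (q n) ∧
        dFlat Ω (p n) (q n) ≤
          (12 * (h - 1) * |a| * ((2 * (volume Ω).toReal + 1 + 2 * M0) / Real.pi))
            * |Real.log (ε n)| ^ (-(h / 2)) := by
      filter_upwards [hev1, hev2, hevEPS] with n hn1 hn2 hn3
      obtain ⟨hε1, hδ1, hLe0, hLe2, hLdeq, hLd0, hLdhalf⟩ := pack (hε n) hr hadef hn1
      have hltC : GLF s h Ω (ε n) (p n) < ((M0 : ℝ) : EReal) := by
        refine lt_of_le_of_lt (hp n) ?_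
        have hCM : C < M0 := by rw [hM0def]; have := le_max_left C 0; linarith
        exact_mod_cast hCM
      obtain ⟨w, hwm, hwc, hwE⟩ := exists_of_GLF_lt hLe0 hltC
      have hsplit := GLE_split hΩb hwm s (ε n)
      have hA0 : (0:ℝ) ≤ ∫ x in Ω, ‖fderiv ℝ w x‖ ^ 2 :=
        integral_nonneg fun x => sq_nonneg _
      have hB0 : (0:ℝ) ≤ ∫ x in Ω, (1 - ‖w x‖) ^ 2 :=
        integral_nonneg fun x => sq_nonneg _
      have hεn := hε n
      have hse : (0:ℝ) < s / ε n ^ 2 := by positivity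
      have hLh : (0:ℝ) < |Real.log (ε n)| ^ h := Real.rpow_pos_of_pos hLe0 _
      have hwE' := hwE
      rw [hsplit] at hwE'
      have hA : (∫ x in Ω, ‖fderiv ℝ w x‖ ^ 2) ≤ 2 * (M0 * |Real.log (ε n)| ^ h) := by
        linarith [mul_nonneg hse.le hB0]
      have hB1 : s / ε n ^ 2 * (∫ x in Ω, (1 - ‖w x‖) ^ 2)
          ≤ 2 * (M0 * |Real.log (ε n)| ^ h) := by linarith
      have hBb : (∫ x in Ω, (1 - ‖w x‖) ^ 2)
          ≤ 2 * (M0 * |Real.log (ε n)| ^ h) * ε n ^ 2 / s := by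
        have h9 : (∫ x in Ω, (1 - ‖w x‖) ^ 2)
            = (s / ε n ^ 2 * ∫ x in Ω, (1 - ‖w x‖) ^ 2) * (ε n ^ 2 / s) := by
          field_simp
        rw [h9]
        calc (s / ε n ^ 2 * ∫ x in Ω, (1 - ‖w x‖) ^ 2) * (ε n ^ 2 / s)
            ≤ (2 * (M0 * |Real.log (ε n)| ^ h)) * (ε n ^ 2 / s) :=
              mul_le_mul_of_nonneg_right hB1 (by positivity)
          _ = 2 * (M0 * |Real.log (ε n)| ^ h) * ε n ^ 2 / s := by ring
      have hU := norm_sq_integral_le hΩb hwm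
      have hU2 : (∫ x in Ω, ‖w x‖ ^ 2) ≤ 2 * (volume Ω).toReal + 1 := by
        have h11 : 2 * (2 * (M0 * |Real.log (ε n)| ^ h) * ε n ^ 2 / s) ≤ 1 := by
          have e7 : 2 * (2 * (M0 * |Real.log (ε n)| ^ h) * ε n ^ 2 / s)
              = (4 * (M0 * |Real.log (ε n)| ^ h) * ε n ^ 2) / s := by ring
          rw [e7, div_le_one hs]
          have h12 : 4 * M0 * (ε n ^ 2 * |Real.log (ε n)| ^ h)
              ≤ 4 * M0 * (s / (4 * M0)) :=
            mul_le_mul_of_nonneg_left hn3 (by positivity)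
          have h13 : 4 * M0 * (s / (4 * M0)) = s := by field_simp
          nlinarith [h12, h13]
        linarith [mul_le_mul_of_nonneg_left hBb (by norm_num : (0:ℝ) ≤ 2)]
      set lam := |Real.log (ε n)| ^ (h / 2) with hlamdef
      have hlam : 0 < lam := Real.rpow_pos_of_pos hLe0 _
      have hll : lam * lam = |Real.log (ε n)| ^ h := by
        rw [hlamdef, ← Real.rpow_add hLe0]
        congr 1
        ring
      have hLh1 : (0:ℝ) < |Real.log (ε n)| ^ (h - 1) := Real.rpow_pos_of_pos hLe0 _
      have hπ : (0:ℝ) < Real.pi := Real.pi_pos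
      have hπL : (0:ℝ) < Real.pi * |Real.log (ε n)| ^ (h - 1) := by positivity
      have hpb : ∀ φ, IsTestFn Ω φ → |p n φ|
          ≤ (2 * (volume Ω).toReal + 1 + 2 * M0) * lam
            / (Real.pi * |Real.log (ε n)| ^ (h - 1)) := by
        intro φ hφ
        have hJ := abs_Jpairing_le hΩo hwm hφ.1 hlam
        have hJb : |Jpairing Ω w φ| ≤ (2 * (volume Ω).toReal + 1 + 2 * M0) * lam := by
          have j1 : lam * (∫ x in Ω, ‖w x‖ ^ 2) ≤ lam * (2 * (volume Ω).toReal + 1) :=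
            mul_le_mul_of_nonneg_left hU2 hlam.le
          have j2 : (1 / lam) * (∫ x in Ω, ‖fderiv ℝ w x‖ ^ 2)
              ≤ (1 / lam) * (2 * (M0 * (lam * lam))) := by
            apply mul_le_mul_of_nonneg_left _ (by positivity)
            rw [hll]; exact hA
          have j3 : (1 / lam) * (2 * (M0 * (lam * lam))) = 2 * M0 * lam := by
            field_simp
          calc |Jpairing Ω w φ| ≤ _ := hJ
            _ ≤ lam * (2 * (volume Ω).toReal + 1) + 2 * M0 * lam := by
                rw [← j3]; exact add_le_add j1 j2
            _ = (2 * (volume Ω).toReal + 1 + 2 * M0) * lam := by ring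
        have hpφ : p n φ = Jpairing Ω w φ / (Real.pi * |Real.log (ε n)| ^ (h - 1)) := by
          rw [hwc φ hφ.isLipc]
          field_simp
        rw [hpφ, abs_div, abs_of_pos hπL]
        exact div_le_div_of_nonneg_right hJb hπL.le
      have hXhalf : 1 / 2 ≤ |Real.log (ε n)| / |Real.log (ε n * r)| := by
        rw [le_div_iff₀ hLd0, hLdeq]
        have := le_abs_self a
        have := neg_abs_le a
        linarith
      have hne : |Real.log (ε n)| - a ≠ 0 := by rw [← hLdeq]; exact hLd0.ne'
      have hXm1 : |(|Real.log (ε n)| / |Real.log (ε n * r)|) - 1|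
          = |a| / |Real.log (ε n * r)| := by
        have e : |Real.log (ε n)| / |Real.log (ε n * r)| - 1
            = a / |Real.log (ε n * r)| := by
          rw [hLdeq]
          field_simp
          ring
        rw [e, abs_div, abs_of_pos hLd0]
      have hXsmall : 2 * (h - 1) * |(|Real.log (ε n)| / |Real.log (ε n * r)|) - 1| ≤ 1 := by
        rw [hXm1]
        have e4 : 2 * (h - 1) * (|a| / |Real.log (ε n * r)|)
            = (2 * (h - 1) * |a|) / |Real.log (ε n * r)| := by ring
        rw [e4, div_le_one hLd0]
        have := abs_nonneg a
        linarith
      have hrat := abs_rpow_sub_one_le (β := h - 1) (by linarith) hXhalf hXsmall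
      have hdiv : (|Real.log (ε n)| / |Real.log (ε n * r)|) ^ (h - 1)
          = |Real.log (ε n)| ^ (h - 1) / |Real.log (ε n * r)| ^ (h - 1) :=
        Real.div_rpow (abs_nonneg _) (abs_nonneg _) _
      rw [hdiv, hXm1] at hrat
      have hrat2 : |(|Real.log (ε n)| ^ (h - 1) / |Real.log (ε n * r)| ^ (h - 1)) - 1|
          ≤ 12 * (h - 1) * |a| / |Real.log (ε n)| := by
        refine hrat.trans ?_
        have e5 : 6 * (h - 1) * (|a| / |Real.log (ε n * r)|)
            = (6 * (h - 1) * |a|) / |Real.log (ε n * r)| := by ring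
        rw [e5, div_le_div_iff₀ hLd0 hLe0]
        nlinarith [mul_nonneg (mul_nonneg (by linarith : (0:ℝ) ≤ 6 * (h - 1)) (abs_nonneg a))
          (by linarith : (0:ℝ) ≤ 2 * |Real.log (ε n * r)| - |Real.log (ε n)|)]
      have hpq : ∀ φ, IsTestFn Ω φ → |p n φ - q n φ|
          ≤ (12 * (h - 1) * |a| * ((2 * (volume Ω).toReal + 1 + 2 * M0) / Real.pi))
            * |Real.log (ε n)| ^ (-(h / 2)) := by
        intro φ hφ
        rw [hq n]
        simp only
        have e0 : p n φ
            - |Real.log (ε n)| ^ (h - 1) / |Real.log (ε n * r)| ^ (h - 1) * p n φ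
            = -((|Real.log (ε n)| ^ (h - 1) / |Real.log (ε n * r)| ^ (h - 1) - 1)
              * p n φ) := by ring
        rw [e0, abs_neg, abs_mul]
        have hbound := mul_le_mul hrat2 (hpb φ hφ) (abs_nonneg _)
          (div_nonneg (mul_nonneg (by linarith : (0:ℝ) ≤ 12 * (h - 1)) (abs_nonneg a))
            (abs_nonneg _))
        refine hbound.trans (le_of_eq ?_)
        have e1 : |Real.log (ε n)| * |Real.log (ε n)| ^ (h - 1)
            = |Real.log (ε n)| ^ h := by
          nth_rewrite 1 [← Real.rpow_one (|Real.log (ε n)|)]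
          rw [← Real.rpow_add hLe0]
          congr 1
          ring
        have e2 : lam = |Real.log (ε n)| ^ h * |Real.log (ε n)| ^ (-(h / 2)) := by
          rw [hlamdef, ← Real.rpow_add hLe0]
          congr 1
          ring
        calc 12 * (h - 1) * |a| / |Real.log (ε n)|
              * ((2 * (volume Ω).toReal + 1 + 2 * M0) * lam
                / (Real.pi * |Real.log (ε n)| ^ (h - 1)))
            = (12 * (h - 1) * |a| * ((2 * (volume Ω).toReal + 1 + 2 * M0) / Real.pi))
              * |Real.log (ε n)| ^ (-(h / 2))
              * (|Real.log (ε n)| ^ h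
                / (|Real.log (ε n)| * |Real.log (ε n)| ^ (h - 1))) := by
              rw [e2]; ring
          _ = (12 * (h - 1) * |a| * ((2 * (volume Ω).toReal + 1 + 2 * M0) / Real.pi))
              * |Real.log (ε n)| ^ (-(h / 2)) := by
              rw [e1, div_self hLh.ne', mul_one]
      have hp0 : p n (fun _ => 0) = 0 := by
        have h20 := hwc _ (isTestFn_zero Ω).isLipc
        rw [Jpairing_zero] at h20
        rcases mul_eq_zero.1 h20.symm with h21 | h21
        · exact absurd h21 hπL.ne'
        · exact h21
      have h0 : p n (fun _ => 0) - q n (fun _ => 0) = 0 := by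
        rw [hq n]; simp [hp0]
      exact dFlat_bounds h0 hpq
    exact squeeze_zero' (hev3.mono fun n h' => h'.1) (hev3.mono fun n h' => h'.2) hg0

end Master

/-- For `0 < s₁ < s₂`, the rescaled Ginzburg–Landau families `(𝒢ℒ^{s₁}_ε)` and `(𝒢ℒ^{s₂}_ε)`
are variationally equivalent. Moreover, for the relation `𝒢ℒ^{s₂} ⪯ 𝒢ℒ^{s₁}` the change of
scale `δ_ε = ε (s₂/s₁)^{1/2}` works: given `(pₙ)` with `𝒢ℒ^{s₁}_{εₙ}(pₙ) ≤ C`, setting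
`qₙ = pₙ · |log εₙ|^{h−1}/|log δ_{εₙ}|^{h−1}` yields
`limsupₙ (𝒢ℒ^{s₂}_{δ_{εₙ}}(qₙ) − 𝒢ℒ^{s₁}_{εₙ}(pₙ)) ≤ 0`, and `d(pₙ, qₙ) → 0` whenever
`(pₙ)` is bounded. -/
theorem GL_scaling_varEquiv
    (Ω : Set (ℝ × ℝ)) (hΩo : IsOpen Ω) (hΩb : Bornology.IsBounded Ω)
    (h : ℝ) (hh : 1 ≤ h) (s₁ s₂ : ℝ) (hs₁ : 0 < s₁) (hs : s₁ < s₂) :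
    VarEquivD (dFlat Ω) (GLF s₁ h Ω) (GLF s₂ h Ω) ∧
    PrecWithD (dFlat Ω) (fun ε => ε * Real.sqrt (s₂ / s₁)) (GLF s₂ h Ω) (GLF s₁ h Ω) ∧
    (∀ ε : ℕ → ℝ, (∀ n, 0 < ε n) → Tendsto ε atTop (nhds 0) →
      ∀ p : ℕ → XF, ∀ C : ℝ, (∀ n, GLF s₁ h Ω (ε n) (p n) ≤ (C : EReal)) →
        ∀ q : ℕ → XF,
          (∀ n, q n = fun φ =>
            (|Real.log (ε n)| ^ (h - 1) / |Real.log (ε n * Real.sqrt (s₂ / s₁))| ^ (h - 1))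
              * p n φ) →
          limsup (fun n =>
              GLF s₂ h Ω (ε n * Real.sqrt (s₂ / s₁)) (q n) - GLF s₁ h Ω (ε n) (p n))
            atTop ≤ (0 : EReal) ∧
          ((∃ R : ℝ, ∀ m n, dFlat Ω (p m) (p n) ≤ R) →
            Tendsto (fun n => dFlat Ω (p n) (q n)) atTop (nhds 0))) := by
  have hs₂ : 0 < s₂ := hs₁.trans hs
  have hP21 : PrecWithD (dFlat Ω) (fun ε => ε * Real.sqrt (s₂ / s₁))
      (GLF s₂ h Ω) (GLF s₁ h Ω) := by
    have hrpos : 0 < Real.sqrt (s₂ / s₁) := Real.sqrt_pos.2 (div_pos hs₂ hs₁)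
    refine ⟨(continuous_id.mul continuous_const).continuousOn, ?_, zero_mul _, ?_⟩
    · intro x _ y _ hxy
      exact mul_lt_mul_of_pos_right hxy hrpos
    · intro ε hε hε0 p C hp
      have hm := master Ω hΩo hΩb h hh s₁ s₂ hs₁ hs₂ ε hε hε0 p C hp
        (fun n => fun φ => (|Real.log (ε n)| ^ (h - 1)
          / |Real.log (ε n * Real.sqrt (s₂ / s₁))| ^ (h - 1)) * p n φ) (fun n => rfl)
      exact ⟨_, hm.1, Or.inr hm.2⟩
  have hP12 : PrecWithD (dFlat Ω) (fun ε => ε * Real.sqrt (s₁ / s₂))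
      (GLF s₁ h Ω) (GLF s₂ h Ω) := by
    have hrpos : 0 < Real.sqrt (s₁ / s₂) := Real.sqrt_pos.2 (div_pos hs₁ hs₂)
    refine ⟨(continuous_id.mul continuous_const).continuousOn, ?_, zero_mul _, ?_⟩
    · intro x _ y _ hxy
      exact mul_lt_mul_of_pos_right hxy hrpos
    · intro ε hε hε0 p C hp
      have hm := master Ω hΩo hΩb h hh s₂ s₁ hs₂ hs₁ ε hε hε0 p C hp
        (fun n => fun φ => (|Real.log (ε n)| ^ (h - 1)
          / |Real.log (ε n * Real.sqrt (s₁ / s₂))| ^ (h - 1)) * p n φ) (fun n => rfl)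
      exact ⟨_, hm.1, Or.inr hm.2⟩
  refine ⟨⟨⟨_, hP12⟩, ⟨_, hP21⟩⟩, hP21, ?_⟩
  intro ε hε hε0 p C hp q hq
  have hm := master Ω hΩo hΩb h hh s₁ s₂ hs₁ hs₂ ε hε hε0 p C hp q hq
  exact ⟨hm.1, fun _ => hm.2⟩
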